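/- In a list schedule for a precedence-constrained task graph on m identical machines, there exists a chain of tasks in the DAG whose execution intervals cover (in time) all intervals during which some machine is idle. Consequently the total idle time satisfies S_idle <= (m-1)·|CP| where |CP| is the length of the longest chain (critical path). -/

import Mathlib

/-- A non-preemptive schedule of tasks (indexed by `ι`, with processing
times `p`) on `m` identical machines. -/
structure MSched (ι : Type) (m : ℕ) (p : ι → ℝ) where
  machine : ι → Fin m
  start : ι → ℝ
  hstart : ∀ j, 0 ≤ start j
  disj : ∀ i j : ι, i ≠ j → machine i = machine j →
    start i + p i ≤ start j ∨ start j + p j ≤ start i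

/-- Completion time of task `j`. -/
def MSched.finish {ι : Type} {m : ℕ} {p : ι → ℝ} (S : MSched ι m p) (j : ι) : ℝ :=
  S.start j + p j

/-- Machine `q` is busy at time `t`. -/
def MSched.busyAt {ι : Type} {m : ℕ} {p : ι → ℝ} (S : MSched ι m p)
    (q : Fin m) (t : ℝ) : Prop :=
  ∃ j, S.machine j = q ∧ S.start j ≤ t ∧ t < S.finish j

/-- Makespan: maximum completion time. -/
noncomputable def MSched.makespan {ι : Type} [Fintype ι] {m : ℕ} {p : ι → ℝ}
    (hne : Nonempty ι) (S : MSched ι m p) : ℝ :=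
  Finset.univ.sup' (Finset.univ_nonempty_iff.mpr hne) S.finish

/-- List schedule: no machine is idle while an unstarted task remains. -/
def MSched.isList {ι : Type} {m : ℕ} {p : ι → ℝ} (S : MSched ι m p) : Prop :=
  ∀ t : ℝ, 0 ≤ t → (∃ q : Fin m, ¬ S.busyAt q t) → ∀ j, S.start j ≤ t

open MeasureTheory in
/-- The counting/measure part. -/
lemma idleBound (n m : ℕ) (hn : 0 < n) (hm : 0 < m)
    (p : Fin n → ℝ) (hp : ∀ j, 0 < p j)
    (S : MSched (Fin n) m p)
    (Cmax : ℝ) (hCmax0 : 0 ≤ Cmax) (hfinle : ∀ j, S.finish j ≤ Cmax)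
    (l : List (Fin n)) (hnd : l.Nodup)
    (hcov : ∀ t : ℝ, 0 ≤ t → t < Cmax → (∃ q : Fin m, ¬ S.busyAt q t) →
        ∃ j ∈ l, S.start j ≤ t ∧ t < S.finish j) :
    m * Cmax - ∑ j, p j ≤ ((m : ℝ) - 1) * (l.map p).sum := by
  classical
  set s : Set ℝ := Set.Ico 0 Cmax with hs
  set U : Set ℝ := ⋃ i ∈ l.toFinset, Set.Ico (S.start i) (S.finish i) with hU
  have hsub : ∀ j, Set.Ico (S.start j) (S.finish j) ⊆ s := by
    intro j x hx
    exact ⟨(S.hstart j).trans hx.1, hx.2.trans_le (hfinle j)⟩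
  have hmeasU : MeasurableSet U := l.toFinset.measurableSet_biUnion
    (fun i _ => measurableSet_Ico)
  have hIcoVol : ∀ j : Fin n, volume (Set.Ico (S.start j) (S.finish j))
      = ENNReal.ofReal (p j) := by
    intro j
    rw [Real.volume_Ico]
    congr 1
    simp [MSched.finish]
  have hsumnn : (0:ℝ) ≤ (l.map p).sum := by
    apply List.sum_nonneg
    intro x hx
    obtain ⟨j, _, rfl⟩ := List.mem_map.mp hx
    exact (hp j).le
  have hUvol : volume U ≤ ENNReal.ofReal ((l.map p).sum) := by
    refine le_trans (measure_biUnion_finset_le _ _) (le_of_eq ?_)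
    calc ∑ i ∈ l.toFinset, volume (Set.Ico (S.start i) (S.finish i))
        = ∑ i ∈ l.toFinset, ENNReal.ofReal (p i) := by
          exact Finset.sum_congr rfl fun i _ => hIcoVol i
      _ = ENNReal.ofReal (∑ i ∈ l.toFinset, p i) :=
          (ENNReal.ofReal_sum_of_nonneg (fun i _ => (hp i).le)).symm
      _ = ENNReal.ofReal ((l.map p).sum) := by
          rw [List.sum_toFinset _ hnd]
  set F : ℝ → ℝ := fun t => ∑ j : Fin n,
    Set.indicator (Set.Ico (S.start j) (S.finish j)) (fun _ => (1:ℝ)) t with hF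
  have hintInd : ∀ (A : Set ℝ), MeasurableSet A → volume A < ⊤ →
      Integrable (A.indicator (fun _ => (1:ℝ))) := by
    intro A hA hfin
    exact (integrable_indicator_iff hA).mpr ((integrableOn_const_iff).mpr (Or.inr hfin))
  have hFint : Integrable F :=
    integrable_finset_sum _ fun j _ => hintInd _ measurableSet_Ico
      (by rw [hIcoVol]; exact ENNReal.ofReal_lt_top)
  have hUfin : volume U < ⊤ := lt_of_le_of_lt hUvol ENNReal.ofReal_lt_top
  have hUint : Integrable (U.indicator (fun _ => (1:ℝ))) := hintInd U hmeasU hUfin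
  -- pointwise bound
  have hpt : ∀ t ∈ s, (m:ℝ) ≤ F t + ((m:ℝ) - 1) * U.indicator (fun _ => (1:ℝ)) t := by
    intro t ht
    obtain ⟨ht0, htC⟩ := ht
    by_cases htU : t ∈ U
    · have h1 : (1:ℝ) ≤ F t := by
        obtain ⟨j, hj, hjt⟩ := Set.mem_iUnion₂.mp htU
        have h2 := Finset.single_le_sum
          (f := fun i => (Set.Ico (S.start i) (S.finish i)).indicator (fun _ => (1:ℝ)) t)
          (fun i _ => Set.indicator_nonneg (fun _ _ => zero_le_one) t)
          (Finset.mem_univ j)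
        rwa [Set.indicator_of_mem hjt] at h2
      rw [Set.indicator_of_mem htU]
      have hm1 : (1:ℝ) ≤ (m:ℝ) := by exact_mod_cast hm
      nlinarith
    · rw [Set.indicator_of_notMem htU]
      have hbusy : ∀ q : Fin m, S.busyAt q t := by
        intro q
        by_contra hq
        obtain ⟨j, hj, h1, h2⟩ := hcov t ht0 htC ⟨q, hq⟩
        exact htU (Set.mem_iUnion₂.mpr ⟨j, List.mem_toFinset.mpr hj, h1, h2⟩)
      have hFcard : F t = ((Finset.univ.filter
          (fun j => S.start j ≤ t ∧ t < S.finish j)).card : ℝ) := by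
        rw [hF]
        simp only [Set.indicator_apply, Set.mem_Ico]
        rw [Finset.sum_ite, Finset.sum_const, Finset.sum_const]
        simp
      have hcard : m ≤ (Finset.univ.filter
          (fun j => S.start j ≤ t ∧ t < S.finish j)).card := by
        have := Finset.card_le_card_of_injOn
          (f := fun q : Fin m => (hbusy q).choose)
          (s := Finset.univ)
          (t := Finset.univ.filter (fun j => S.start j ≤ t ∧ t < S.finish j)) ?_ ?_
        · simpa using this
        · intro q _
          obtain ⟨hm1, hm2, hm3⟩ := (hbusy q).choose_spec
          exact Finset.mem_filter.mpr ⟨Finset.mem_univ _, hm2, hm3⟩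
        · intro q1 _ q2 _ heq
          have h1 := (hbusy q1).choose_spec.1
          have h2 := (hbusy q2).choose_spec.1
          simp only at heq
          rw [← h1, ← h2, heq]
      have : (m:ℝ) ≤ F t := by
        rw [hFcard]
        exact_mod_cast hcard
      linarith
  -- integral bound
  have hmeass : MeasurableSet s := measurableSet_Ico
  have hsvol : volume s = ENNReal.ofReal Cmax := by rw [hs, Real.volume_Ico, sub_zero]
  have hconst : ∫ _ in s, (m:ℝ) = Cmax * m := by
    rw [setIntegral_const, measureReal_def, hsvol, ENNReal.toReal_ofReal hCmax0, smul_eq_mul]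
  have hRHSint : IntegrableOn (fun t => F t + ((m:ℝ) - 1) * U.indicator (fun _ => (1:ℝ)) t) s :=
    (hFint.integrableOn).add ((hUint.integrableOn).const_mul _)
  have hmono : ∫ _ in s, (m:ℝ) ≤
      ∫ t in s, (F t + ((m:ℝ) - 1) * U.indicator (fun _ => (1:ℝ)) t) :=
    setIntegral_mono_on ((integrableOn_const_iff).mpr (Or.inr (by rw [hsvol]; exact ENNReal.ofReal_lt_top)))
      hRHSint hmeass hpt
  have hFeq : ∫ t in s, F t = ∑ j, p j := by
    rw [hF, integral_finset_sum _ (fun j _ => (hintInd _ measurableSet_Ico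
      (by rw [hIcoVol]; exact ENNReal.ofReal_lt_top)).integrableOn)]
    refine Finset.sum_congr rfl fun j _ => ?_
    rw [setIntegral_indicator measurableSet_Ico,
      Set.inter_eq_right.mpr (hsub j), setIntegral_const, measureReal_def, hIcoVol,
      ENNReal.toReal_ofReal (hp j).le, smul_eq_mul, mul_one]
  have hUeq : ∫ t in s, U.indicator (fun _ => (1:ℝ)) t = (volume (s ∩ U)).toReal := by
    rw [setIntegral_indicator hmeasU, setIntegral_const, measureReal_def, smul_eq_mul, mul_one]
  have hsplit : ∫ t in s, (F t + ((m:ℝ) - 1) * U.indicator (fun _ => (1:ℝ)) t)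
      = (∑ j, p j) + ((m:ℝ) - 1) * (volume (s ∩ U)).toReal := by
    rw [integral_add (hFint.integrableOn) ((hUint.integrableOn).const_mul _),
      integral_const_mul, hFeq, hUeq]
  have hVle : (volume (s ∩ U)).toReal ≤ (l.map p).sum :=
    ENNReal.toReal_le_of_le_ofReal hsumnn
      (le_trans (measure_mono Set.inter_subset_right) hUvol)
  have hm1 : (0:ℝ) ≤ (m:ℝ) - 1 := by
    have : (1:ℝ) ≤ (m:ℝ) := by exact_mod_cast hm
    linarith
  have := hmono
  rw [hconst, hsplit] at this
  nlinarith [mul_le_mul_of_nonneg_left hVle hm1]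

/-- Key chain construction. -/
lemma chainCover (n m : ℕ) (p : Fin n → ℝ) (hp : ∀ j, 0 < p j)
    (prec : Fin n → Fin n → Prop)
    (S : MSched (Fin n) m p)
    (hprec : ∀ i j, prec i j → S.finish i ≤ S.start j)
    (hlist : ∀ t : ℝ, 0 ≤ t → ∀ j : Fin n,
      (∀ i, prec i j → S.finish i ≤ t) → (∃ q : Fin m, ¬ S.busyAt q t) →
      S.start j ≤ t)
    (j : Fin n) :
    ∃ l : List (Fin n), l ≠ [] ∧ l.Chain' prec ∧ l.getLast? = some j ∧
      ∀ t : ℝ, 0 ≤ t → t < S.finish j → (∃ q : Fin m, ¬ S.busyAt q t) →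
        ∃ i ∈ l, S.start i ≤ t ∧ t < S.finish i := by
  classical
  set μ : Fin n → ℕ := fun j => (Finset.univ.filter (fun i => S.start i < S.start j)).card
    with hμ
  suffices H : ∀ k, ∀ j : Fin n, μ j = k → ∃ l : List (Fin n), l ≠ [] ∧ l.Chain' prec ∧
      l.getLast? = some j ∧
      ∀ t : ℝ, 0 ≤ t → t < S.finish j → (∃ q : Fin m, ¬ S.busyAt q t) →
        ∃ i ∈ l, S.start i ≤ t ∧ t < S.finish i by
    exact H (μ j) j rfl
  intro k
  induction k using Nat.strong_induction_on with
  | _ k IH =>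
  intro j hk
  by_cases hidle : ∃ t : ℝ, 0 ≤ t ∧ t < S.start j ∧ ∃ q : Fin m, ¬ S.busyAt q t
  · obtain ⟨t0, ht0, ht0j, hq0⟩ := hidle
    -- j has a predecessor
    have hpred : ∃ i, prec i j ∧ t0 < S.finish i := by
      by_contra h
      push_neg at h
      exact absurd (hlist t0 ht0 j (fun i hi => le_of_not_gt (fun hlt => (h i hi).not_gt hlt)) hq0)
        (not_le.mpr ht0j)
    have hPne : (Finset.univ.filter (fun i => prec i j)).Nonempty := by
      obtain ⟨i, hi, _⟩ := hpred
      exact ⟨i, by simp [hi]⟩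
    obtain ⟨i0, hi0mem, hi0max⟩ := Finset.exists_max_image _ S.finish hPne
    have hi0 : prec i0 j := by simpa using hi0mem
    have hfin : S.finish i0 ≤ S.start j := hprec _ _ hi0
    have hs0 : S.start i0 < S.start j := lt_of_lt_of_le
      (by simpa [MSched.finish] using (lt_add_of_pos_right (S.start i0) (hp i0))) hfin
    -- key covering fact
    have key : ∀ t : ℝ, 0 ≤ t → t < S.start j → (∃ q : Fin m, ¬ S.busyAt q t) →
        t < S.finish i0 := by
      intro t ht htj hq
      by_contra h
      push_neg at h
      have : ∀ i, prec i j → S.finish i ≤ t := by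
        intro i hi
        exact le_trans (hi0max i (by simp [hi])) h
      exact absurd (hlist t ht j this hq) (not_le.mpr htj)
    -- measure decreases
    have hlt : μ i0 < μ j := by
      apply Finset.card_lt_card
      constructor
      · intro i hi
        simp only [Finset.mem_filter, Finset.mem_univ, true_and] at hi ⊢
        exact hi.trans hs0
      · intro hsub
        have := hsub (by simp [hs0] : i0 ∈ Finset.univ.filter (fun i => S.start i < S.start j))
        simp at this
    obtain ⟨l', hne', hch', hlast', hcov'⟩ := IH (μ i0) (hk ▸ hlt) i0 rfl
    refine ⟨l' ++ [j], by simp, ?_, by simp, ?_⟩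
    · show List.IsChain prec (l' ++ [j])
      rw [List.isChain_append]
      refine ⟨hch', List.isChain_singleton j, ?_⟩
      intro x hx y hy
      rw [hlast'] at hx
      simp at hx hy
      rw [← hx, ← hy]
      exact hi0
    · intro t ht htf hq
      by_cases hts : t < S.start j
      · obtain ⟨i, hi, h1, h2⟩ := hcov' t ht (key t ht hts hq) hq
        exact ⟨i, by simp [hi], h1, h2⟩
      · exact ⟨j, by simp, le_of_not_gt hts, htf⟩
  · refine ⟨[j], by simp, List.isChain_singleton j, by simp, ?_⟩
    intro t ht htf hq
    refine ⟨j, by simp, ?_, htf⟩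
    by_contra h
    exact hidle ⟨t, ht, lt_of_not_ge h, hq⟩

/-- in a list schedule of a precedence-constrained task graph on
`m` identical machines, there is a chain of the DAG whose execution intervals
cover all times at which some machine is idle; consequently the total idle
time `Sidle = m·Cmax - W` satisfies `Sidle ≤ (m-1)·CP`, where `CP` bounds the
length of every chain (critical path). -/
theorem list_scheduling_idle_covered_by_chain
    (n m : ℕ) (hn : 0 < n) (hm : 0 < m)
    (p : Fin n → ℝ) (hp : ∀ j, 0 < p j)
    (prec : Fin n → Fin n → Prop)
    (S : MSched (Fin n) m p)
    (hprec : ∀ i j, prec i j → S.finish i ≤ S.start j)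
    (hlist : ∀ t : ℝ, 0 ≤ t → ∀ j : Fin n,
      (∀ i, prec i j → S.finish i ≤ t) → (∃ q : Fin m, ¬ S.busyAt q t) →
      S.start j ≤ t)
    (Cmax : ℝ) (hC : Cmax = S.makespan ⟨⟨0, hn⟩⟩)
    (Sidle : ℝ) (hS : Sidle = m * Cmax - ∑ j, p j)
    (CP : ℝ) (hCP : ∀ l : List (Fin n), l.Chain' prec → (l.map p).sum ≤ CP) :
    (∃ l : List (Fin n), l.Chain' prec ∧
      ∀ t : ℝ, 0 ≤ t → t < Cmax → (∃ q : Fin m, ¬ S.busyAt q t) →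
        ∃ j ∈ l, S.start j ≤ t ∧ t < S.finish j) ∧
    Sidle ≤ ((m : ℝ) - 1) * CP := by
  classical
  obtain ⟨jm, _, hjm⟩ := Finset.exists_max_image Finset.univ S.finish
    ⟨⟨0, hn⟩, Finset.mem_univ _⟩
  have hCfin : Cmax = S.finish jm := by
    rw [hC, MSched.makespan]
    exact le_antisymm (Finset.sup'_le _ _ fun j _ => hjm j (Finset.mem_univ j))
      (Finset.le_sup' _ (Finset.mem_univ jm))
  have hfinle : ∀ j, S.finish j ≤ Cmax := by
    intro j
    rw [hCfin]
    exact hjm j (Finset.mem_univ j)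
  have hCmax0 : 0 ≤ Cmax := by
    rw [hCfin, MSched.finish]
    exact add_nonneg (S.hstart jm) (hp jm).le
  obtain ⟨l, hne, hch, hlast, hcov⟩ := chainCover n m p hp prec S hprec hlist jm
  have hcov' : ∀ t : ℝ, 0 ≤ t → t < Cmax → (∃ q : Fin m, ¬ S.busyAt q t) →
      ∃ j ∈ l, S.start j ≤ t ∧ t < S.finish j := by
    intro t ht htC hq
    exact hcov t ht (hCfin ▸ htC) hq
  refine ⟨⟨l, hch, hcov'⟩, ?_⟩
  -- nodup
  set r : Fin n → Fin n → Prop := fun i j => S.finish i ≤ S.start j with hr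
  haveI : IsTrans (Fin n) r := ⟨fun a b c hab hbc =>
    le_trans hab (le_trans (le_add_of_nonneg_right (hp b).le) hbc)⟩
  have hchr : l.Chain' r := List.IsChain.imp (fun a b h => hprec a b h) hch
  have hnd : l.Nodup := by
    refine List.Pairwise.imp ?_ (List.isChain_iff_pairwise.mp hchr)
    intro a b hab heq
    subst heq
    have : S.start a + p a ≤ S.start a := hab
    nlinarith [hp a]
  have hbound := idleBound n m hn hm p hp S Cmax hCmax0 hfinle l hnd hcov'
  have hCPl : (l.map p).sum ≤ CP := hCP l hch
  have hm1 : (0:ℝ) ≤ (m:ℝ) - 1 := by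
    have : (1:ℝ) ≤ (m:ℝ) := by exact_mod_cast hm
    linarith
  rw [hS]
  calc (m:ℝ) * Cmax - ∑ j, p j ≤ ((m:ℝ) - 1) * (l.map p).sum := hbound
    _ ≤ ((m:ℝ) - 1) * CP := mul_le_mul_of_nonneg_left hCPl hm1
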